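/- The matrix T = [[6,1,1,0,0],[5,1,1,1,0],[5,1,1,0,1],[6,0,1,0,0],[6,1,0,0,0]] has a real eigenvalue λ with 7.96 < λ < 7.97, and λ is the largest real root of its characteristic polynomial. -/

import Mathlib

/-- State-transition matrix of the FSTD for GF(8) sequences avoiding (0,β,0) and (β⁶,β⁴,β⁶). -/
noncomputable def T : Matrix (Fin 5) (Fin 5) ℝ :=
  !![6, 1, 1, 0, 0;
     5, 1, 1, 1, 0;
     5, 1, 1, 0, 1;
     6, 0, 1, 0, 0;
     6, 1, 0, 0, 0]

set_option maxHeartbeats 4000000 in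
set_option maxRecDepth 4000 in
lemma eval_cp (x : ℝ) : (Matrix.charpoly T).eval x = x^5-8*x^4+2*x^3-14*x^2+x-6 := by
  have h1 : (Matrix.charpoly T).eval x
      = ((Matrix.charmatrix T).map (Polynomial.evalRingHom x)).det := by
    rw [Matrix.charpoly, ← Polynomial.coe_evalRingHom, RingHom.map_det]; rfl
  have h2 : (Matrix.charmatrix T).map (Polynomial.evalRingHom x)
      = !![x-6, -1, -1, 0, 0;
           -5, x-1, -1, -1, 0;
           -5, -1, x-1, 0, -1;
           -6, 0, -1, x, 0;
           -6, -1, 0, 0, x] := by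
    ext i j
    fin_cases i <;> fin_cases j <;>
      simp [T, Matrix.charmatrix_apply, Matrix.diagonal, Matrix.vecHead, Matrix.vecTail] <;> ring
  rw [h1, h2]
  simp [Matrix.det_succ_row_zero, Fin.sum_univ_succ, Matrix.vecHead, Matrix.vecTail,
    Fin.succAbove, Fin.succ, show ((3:Fin 4):ℕ)=3 from rfl]
  ring

lemma pos797 (x : ℝ) (hx : (7.97:ℝ) ≤ x) : (0:ℝ) < x^5-8*x^4+2*x^3-14*x^2+x-6 := by
  rcases le_or_gt x 8 with h | h
  · nlinarith [sq_nonneg x, sq_nonneg (x-8), pow_le_pow_left₀ (by linarith : (0:ℝ) ≤ x) h 4,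
      sq_nonneg (x*x)]
  · nlinarith [sq_nonneg x, sq_nonneg (x*x), pow_pos (by linarith : (0:ℝ) < x) 4]

lemma ivt_root : ∃ r : ℝ, 7.96 < r ∧ r < 7.97 ∧ r^5-8*r^4+2*r^3-14*r^2+r-6 = 0 := by
  have hc : Continuous fun x : ℝ => x^5-8*x^4+2*x^3-14*x^2+x-6 := by continuity
  have h := intermediate_value_Ioo (by norm_num : (7.96:ℝ) ≤ 7.97) hc.continuousOn
  have h0 : (0:ℝ) ∈ Set.Ioo ((7.96:ℝ)^5-8*7.96^4+2*7.96^3-14*7.96^2+7.96-6)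
      ((7.97:ℝ)^5-8*7.97^4+2*7.97^3-14*7.97^2+7.97-6) := by constructor <;> norm_num
  obtain ⟨r, hr, hr0⟩ := h h0
  exact ⟨r, hr.1, hr.2, hr0⟩

theorem stmt_16 :
    ∃ l : ℝ, (Matrix.charpoly T).IsRoot l ∧ 7.96 < l ∧ l < 7.97 ∧
      ∀ x : ℝ, (Matrix.charpoly T).IsRoot x → x ≤ l := by
  obtain ⟨r, hr1, hr2, hr0⟩ := ivt_root
  have hpne : Matrix.charpoly T ≠ 0 := by
    intro h
    have := eval_cp 0
    rw [h] at this
    norm_num at this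
  have hrroot : (Matrix.charpoly T).IsRoot r := by
    rw [Polynomial.IsRoot, eval_cp]; exact hr0
  set s := (Matrix.charpoly T).roots.toFinset with hs
  have hmem : ∀ x : ℝ, (Matrix.charpoly T).IsRoot x ↔ x ∈ s := by
    intro x
    rw [hs, Multiset.mem_toFinset, Polynomial.mem_roots hpne]
  have hne : s.Nonempty := ⟨r, (hmem r).1 hrroot⟩
  refine ⟨s.max' hne, (hmem _).2 (s.max'_mem hne), ?_, ?_, ?_⟩
  · exact lt_of_lt_of_le hr1 (s.le_max' r ((hmem r).1 hrroot))
  · by_contra h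
    push_neg at h
    have := pos797 (s.max' hne) h
    have h2 := (hmem _).2 (s.max'_mem hne)
    rw [Polynomial.IsRoot, eval_cp] at h2
    linarith
  · intro x hx
    exact s.le_max' x ((hmem x).1 hx)
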